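/- Let A > 0, a > 0, L > 0 satisfy L a² = A + a. Let x₀, x_k, v ∈ ℝ^n, h ∈ ℝ, g ∈ ℝ^n, and define the estimate function ψ(x) = h + ⟨g, x⟩ + (1/(2A))‖x − x₀‖²; let v be its minimizer and ψ* its minimum value, and assume ψ* ≥ F(x_k). Set y = (A x_k + a v)/(A + a), suppose the descent condition holds at y with constant L, and set x₊ = T_L(y), ḡ = L(y − x₊), h̄ = F(x₊) + (1/(2L))‖ḡ‖² − ⟨ḡ, y⟩. Then the new estimate function ψ̄(x) = (A (h + ⟨g, x⟩) + a (h̄ + ⟨ḡ, x⟩))/(A + a) + (1/(2(A + a)))‖x − x₀‖² satisfies inf_{x ∈ ℝ^n} ψ̄(x) ≥ F(x₊). -/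

import Mathlib

open Set
open scoped RealInnerProductSpace

/-- `Euc n` is the Euclidean space `ℝ^n`. -/
abbrev Euc (n : ℕ) := EuclideanSpace ℝ (Fin n)

lemma grad_ineq {n : ℕ} (f : Euc n → ℝ) (f' : Euc n → Euc n)
    (hf : ConvexOn ℝ Set.univ f) (hf' : ∀ z, HasGradientAt f (f' z) z)
    (y x : Euc n) : f y + ⟪f' y, x - y⟫ ≤ f x := by
  rcases eq_or_ne x y with rfl | hxy
  · simp
  · set φ : ℝ → ℝ := fun t => f (AffineMap.lineMap y x t) with hφ
    have hconv : ConvexOn ℝ Set.univ φ := by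
      have := hf.comp_affineMap (AffineMap.lineMap y x : ℝ →ᵃ[ℝ] Euc n)
      exact this
    have hc : HasDerivAt (fun t : ℝ => y + t • (x - y)) (x - y) 0 := by
      simpa using ((hasDerivAt_id (0:ℝ)).smul_const (x - y)).const_add y
    have hder : HasDerivAt φ ⟪f' y, x - y⟫ 0 := by
      have h0 : HasFDerivAt f (InnerProductSpace.toDual ℝ (Euc n) (f' y))
          (y + (0:ℝ) • (x - y)) := by simpa using (hf' y).hasFDerivAt
      have := h0.comp_hasDerivAt (x := (0:ℝ)) (f := fun t : ℝ => y + t • (x - y)) (by simpa using hc)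
      · have e : φ = f ∘ fun t : ℝ => y + t • (x - y) := by
          funext t
          simp only [φ, Function.comp_apply, AffineMap.lineMap_apply, vsub_eq_sub, vadd_eq_add]
          rw [add_comm]
        rw [e]
        exact this
    have hslope := hconv.le_slope_of_hasDerivAt (mem_univ (0:ℝ)) (mem_univ (1:ℝ))
      one_pos hder
    have : slope φ 0 1 = f x - f y := by
      simp [slope, φ, AffineMap.lineMap_apply]
    rw [this] at hslope
    linarith

-- subgradient inequality for Ψ at the prox point
lemma prox_subgrad {n : ℕ} (Ψ : Euc n → ℝ) (hΨ : ConvexOn ℝ Set.univ Ψ)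
    (L : ℝ) (hL : 0 < L) (y xplus p : Euc n)
    (hT : ∀ z, ⟪p, xplus - y⟫ + L / 2 * ‖xplus - y‖ ^ 2 + Ψ xplus
        ≤ ⟪p, z - y⟫ + L / 2 * ‖z - y‖ ^ 2 + Ψ z)
    (x : Euc n) :
    Ψ xplus + ⟪L • (y - xplus) - p, x - xplus⟫ ≤ Ψ x := by
  set C : ℝ := ⟪p, x - xplus⟫ + L * ⟪xplus - y, x - xplus⟫ + Ψ x - Ψ xplus with hC
  set D : ℝ := L / 2 * ‖x - xplus‖ ^ 2 with hD
  have hD0 : 0 ≤ D := by positivity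
  have hkey : ∀ t : ℝ, 0 < t → t ≤ 1 → 0 ≤ C + t * D := by
    intro t ht0 ht1
    have hTz := hT (xplus + t • (x - xplus))
    have hcomb : Ψ (xplus + t • (x - xplus)) ≤ (1 - t) * Ψ xplus + t * Ψ x := by
      have := hΨ.2 (mem_univ xplus) (mem_univ x) (by linarith : (0:ℝ) ≤ 1 - t)
        ht0.le (by ring)
      have heq : (1 - t) • xplus + t • x = xplus + t • (x - xplus) := by
        rw [sub_smul, one_smul, smul_sub]; abel
      rw [heq] at this
      simpa using this
    have e1 : ⟪p, xplus + t • (x - xplus) - y⟫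
        = ⟪p, xplus - y⟫ + t * ⟪p, x - xplus⟫ := by
      have : xplus + t • (x - xplus) - y = (xplus - y) + t • (x - xplus) := by abel
      rw [this, inner_add_right, real_inner_smul_right]
    have e2 : ‖xplus + t • (x - xplus) - y‖ ^ 2
        = ‖xplus - y‖ ^ 2 + 2 * (t * ⟪xplus - y, x - xplus⟫) + t ^ 2 * ‖x - xplus‖ ^ 2 := by
      have h' : xplus + t • (x - xplus) - y = (xplus - y) + t • (x - xplus) := by abel
      rw [h', norm_add_sq_real, real_inner_smul_right, norm_smul]
      simp [Real.norm_eq_abs, mul_pow, sq_abs]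
    rw [e1, e2] at hTz
    have htE : 0 ≤ t * (C + t * D) := by
      rw [hC, hD]; nlinarith [hTz, hcomb]
    exact le_of_mul_le_mul_left (by linarith [htE] : t * 0 ≤ t * (C + t * D)) ht0
  by_contra hcon
  push_neg at hcon
  have hCx : ⟪L • (y - xplus) - p, x - xplus⟫
      = -(L * ⟪xplus - y, x - xplus⟫) - ⟪p, x - xplus⟫ := by
    rw [inner_sub_left, real_inner_smul_left]
    have : ⟪y - xplus, x - xplus⟫ = -⟪xplus - y, x - xplus⟫ := by
      rw [← inner_neg_left, neg_sub]
    rw [this]; ring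
  have hC0 : C < 0 := by rw [hC]; rw [hCx] at hcon; linarith
  set t : ℝ := min 1 ((-C) / (D + 1)) with ht
  have ht0 : 0 < t := by
    apply lt_min one_pos
    apply div_pos (by linarith) (by linarith)
  have ht1 : t ≤ 1 := min_le_left _ _
  have ht2 : t * (D + 1) ≤ -C := by
    have : t ≤ (-C) / (D + 1) := min_le_right _ _
    exact (le_div_iff₀ (by linarith)).mp this
  have := hkey t ht0 ht1
  nlinarith

-- the minimizer of the quadratic estimate function determines g
lemma min_quad {n : ℕ} (A : ℝ) (hA : 0 < A) (x0 v : Euc n) (h : ℝ) (g : Euc n)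
    (hv : ∀ z, h + ⟪g, v⟫ + 1 / (2 * A) * ‖v - x0‖ ^ 2
        ≤ h + ⟪g, z⟫ + 1 / (2 * A) * ‖z - x0‖ ^ 2) :
    g = A⁻¹ • (x0 - v) := by
  set w : Euc n := g + A⁻¹ • (v - x0) with hw
  have h1 := hv (v - A • w)
  have e1 : ⟪g, v - A • w⟫ = ⟪g, v⟫ - A * ⟪g, w⟫ := by
    rw [inner_sub_right, real_inner_smul_right]
  have e2 : ‖v - A • w - x0‖ ^ 2
      = ‖v - x0‖ ^ 2 - 2 * (A * ⟪v - x0, w⟫) + A ^ 2 * ‖w‖ ^ 2 := by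
    have h' : v - A • w - x0 = (v - x0) - A • w := by abel
    rw [h', norm_sub_sq_real, real_inner_smul_right, norm_smul]
    simp [Real.norm_eq_abs, mul_pow, sq_abs]
  have e3 : A * ‖w‖ ^ 2 = A * ⟪g, w⟫ + ⟪v - x0, w⟫ := by
    have h4 : ⟪w, w⟫ = ⟪g, w⟫ + A⁻¹ * ⟪v - x0, w⟫ := by
      rw [hw, inner_add_left, real_inner_smul_left]
    have h5 : ⟪w, w⟫ = ‖w‖ ^ 2 := real_inner_self_eq_norm_sq w
    rw [h5] at h4
    have h6 : A * ‖w‖ ^ 2 = A * ⟪g, w⟫ + A * (A⁻¹ * ⟪v - x0, w⟫) := by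
      rw [h4]; ring
    rw [← mul_assoc, mul_inv_cancel₀ hA.ne', one_mul] at h6
    exact h6
  rw [e1, e2] at h1
  have hA' : (A:ℝ) ≠ 0 := ne_of_gt hA
  have h6 : 0 ≤ -(A * ⟪g, w⟫) - ⟪v - x0, w⟫ + A / 2 * ‖w‖ ^ 2 := by
    have expand : 1 / (2 * A) * (‖v - x0‖ ^ 2 - 2 * (A * ⟪v - x0, w⟫) + A ^ 2 * ‖w‖ ^ 2)
        - 1 / (2 * A) * ‖v - x0‖ ^ 2 = -⟪v - x0, w⟫ + A / 2 * ‖w‖ ^ 2 := by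
      field_simp; ring
    nlinarith [h1]
  have h7 : ‖w‖ ^ 2 ≤ 0 := by nlinarith
  have h8 : w = 0 := by
    have : ‖w‖ ^ 2 = 0 := le_antisymm h7 (by positivity)
    simpa using this
  have : g = -(A⁻¹ • (v - x0)) := by
    rw [← add_eq_zero_iff_eq_neg]; exact h8
  rw [this, ← smul_neg, neg_sub]

/-- Theorem 7: estimate sequence feasibility preservation of the
Accelerated Gradient Method with Memory. If `L a² = A + a`, `ψ* ≥ F(x_k)` for the current
estimate function `ψ(x) = h + ⟨g, x⟩ + (1/(2A))‖x − x₀‖²` with minimizer `v`,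
`y = (A x_k + a v)/(A + a)`, `x₊ = T_L(y)` with the descent condition at `y`,
`ḡ = L(y − x₊)` and `h̄ = F(x₊) + (1/(2L))‖ḡ‖² − ⟨ḡ, y⟩`, then the new estimate function
`ψ̄(x) = (A(h + ⟨g, x⟩) + a(h̄ + ⟨ḡ, x⟩))/(A + a) + (1/(2(A+a)))‖x − x₀‖²` satisfies
`inf ψ̄ ≥ F(x₊)`. -/
theorem agmm_estimate_feasibility {n : ℕ}
    (f Ψ F : Euc n → ℝ) (f' : Euc n → Euc n)
    (hf : ConvexOn ℝ Set.univ f)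
    (hf' : ∀ z, HasGradientAt f (f' z) z)
    (hΨ : ConvexOn ℝ Set.univ Ψ)
    (hΨlsc : LowerSemicontinuous Ψ)
    (hF : ∀ z, F z = f z + Ψ z)
    (A a L : ℝ) (hA : 0 < A) (ha : 0 < a) (hL : 0 < L)
    (hweight : L * a ^ 2 = A + a)
    (x0 xk v : Euc n) (h : ℝ) (g : Euc n)
    (hv : ∀ z, h + ⟪g, v⟫ + 1 / (2 * A) * ‖v - x0‖ ^ 2
        ≤ h + ⟪g, z⟫ + 1 / (2 * A) * ‖z - x0‖ ^ 2)
    (hfeas : F xk ≤ h + ⟪g, v⟫ + 1 / (2 * A) * ‖v - x0‖ ^ 2)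
    (y : Euc n) (hy : y = (A + a)⁻¹ • (A • xk + a • v))
    (xplus : Euc n)
    (hT : ∀ z, f y + ⟪f' y, xplus - y⟫ + L / 2 * ‖xplus - y‖ ^ 2 + Ψ xplus
        ≤ f y + ⟪f' y, z - y⟫ + L / 2 * ‖z - y‖ ^ 2 + Ψ z)
    (hdesc : f xplus ≤ f y + ⟪f' y, xplus - y⟫ + L / 2 * ‖xplus - y‖ ^ 2)
    (gbar : Euc n) (hgbar : gbar = L • (y - xplus))
    (hbar : ℝ) (hhbar : hbar = F xplus + 1 / (2 * L) * ‖gbar‖ ^ 2 - ⟪gbar, y⟫) :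
    ∀ z, F xplus ≤ (A * (h + ⟪g, z⟫) + a * (hbar + ⟪gbar, z⟫)) / (A + a)
        + 1 / (2 * (A + a)) * ‖z - x0‖ ^ 2 := by
  intro z
  have hAa : (0:ℝ) < A + a := by linarith
  -- gradient inequality for f
  have hconvf : ∀ x, f y + ⟪f' y, x - y⟫ ≤ f x := grad_ineq f f' hf hf' y
  -- subgradient inequality for Ψ at xplus
  have hsub : ∀ x, Ψ xplus + ⟪gbar - f' y, x - xplus⟫ ≤ Ψ x := by
    intro x
    have hT' : ∀ w, ⟪f' y, xplus - y⟫ + L / 2 * ‖xplus - y‖ ^ 2 + Ψ xplus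
        ≤ ⟪f' y, w - y⟫ + L / 2 * ‖w - y‖ ^ 2 + Ψ w := fun w => by linarith [hT w]
    have := prox_subgrad Ψ hΨ L hL y xplus (f' y) hT' x
    rwa [← hgbar] at this
  -- identities relating gbar and xplus - y
  have hyx : y - xplus = L⁻¹ • gbar := by
    rw [hgbar, smul_smul, inv_mul_cancel₀ hL.ne', one_smul]
  have hid1 : ⟪gbar, y - xplus⟫ = L⁻¹ * ‖gbar‖ ^ 2 := by
    rw [hyx, real_inner_smul_right, real_inner_self_eq_norm_sq]
  have hid2 : L / 2 * ‖xplus - y‖ ^ 2 = 1 / (2 * L) * ‖gbar‖ ^ 2 := by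
    have hn : ‖gbar‖ = L * ‖xplus - y‖ := by
      rw [hgbar, norm_smul, Real.norm_eq_abs, abs_of_pos hL, norm_sub_rev]
    rw [hn]; field_simp
  -- the simple lower bound on F
  have hlow : ∀ x, F xplus + ⟪gbar, x - y⟫ + 1 / (2 * L) * ‖gbar‖ ^ 2 ≤ F x := by
    intro x
    have h1 := hconvf x
    have h2 := hsub x
    have s1 : ⟪gbar - f' y, x - xplus⟫
        = ⟪gbar, x - y⟫ + ⟪gbar, y - xplus⟫ - ⟪f' y, x - xplus⟫ := by
      rw [inner_sub_left]
      have hx : (⟪gbar, x - xplus⟫ : ℝ) = ⟪gbar, x - y⟫ + ⟪gbar, y - xplus⟫ := by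
        rw [← inner_add_right]
        congr 1
        abel
      rw [hx]
    have s2 : (⟪f' y, x - y⟫ : ℝ) = ⟪f' y, x - xplus⟫ + ⟪f' y, xplus - y⟫ := by
      rw [← inner_add_right]
      congr 1
      abel
    have hid1' : ⟪gbar, y - xplus⟫ = 1 / L * ‖gbar‖ ^ 2 := by
      rw [hid1]; ring
    rw [hF x, hF xplus]
    rw [s1, hid1'] at h2
    rw [s2] at h1
    have hdesc' : f xplus ≤ f y + ⟪f' y, xplus - y⟫ + 1 / (2 * L) * ‖gbar‖ ^ 2 := by
      rw [← hid2]; exact hdesc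
    have hLpos : 1 / L * ‖gbar‖ ^ 2 = 2 * (1 / (2 * L) * ‖gbar‖ ^ 2) := by
      field_simp
    linarith
  -- minimizer of the old estimate function
  have hg : g = A⁻¹ • (x0 - v) := min_quad A hA x0 v h g hv
  -- expansion of the estimate function around its minimizer
  have hpsi : h + ⟪g, v⟫ + 1 / (2 * A) * ‖v - x0‖ ^ 2 + 1 / (2 * A) * ‖z - v‖ ^ 2
      = h + ⟪g, z⟫ + 1 / (2 * A) * ‖z - x0‖ ^ 2 := by
    have e : ‖z - x0‖ ^ 2 = ‖z - v‖ ^ 2 + 2 * ⟪z - v, v - x0⟫ + ‖v - x0‖ ^ 2 := by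
      have h' : z - x0 = (z - v) + (v - x0) := by abel
      rw [h', norm_add_sq_real]
    have e' : (⟪g, z⟫ : ℝ) - ⟪g, v⟫ = -(A⁻¹ * ⟪z - v, v - x0⟫) := by
      have : (⟪g, z⟫ : ℝ) - ⟪g, v⟫ = ⟪g, z - v⟫ := by rw [inner_sub_right]
      rw [this, hg, real_inner_smul_left]
      have : (⟪x0 - v, z - v⟫ : ℝ) = -⟪z - v, v - x0⟫ := by
        rw [real_inner_comm, ← inner_neg_right, neg_sub]
      rw [this]; ring
    have cA : A * A⁻¹ = 1 := mul_inv_cancel₀ hA.ne'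
    rw [e]
    have expand : 1 / (2 * A) * (‖z - v‖ ^ 2 + 2 * ⟪z - v, v - x0⟫ + ‖v - x0‖ ^ 2)
        = 1 / (2 * A) * ‖z - v‖ ^ 2 + A⁻¹ * ⟪z - v, v - x0⟫
          + 1 / (2 * A) * ‖v - x0‖ ^ 2 := by
      field_simp
    rw [expand]
    linarith [e']
  -- key multiplied inequalities
  have f1' : A * F xk + 1 / 2 * ‖z - v‖ ^ 2
      ≤ A * (h + ⟪g, z⟫) + 1 / 2 * ‖z - x0‖ ^ 2 := by
    have q : F xk + 1 / (2 * A) * ‖z - v‖ ^ 2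
        ≤ (h + ⟪g, z⟫) + 1 / (2 * A) * ‖z - x0‖ ^ 2 := by linarith [hpsi, hfeas]
    calc A * F xk + 1 / 2 * ‖z - v‖ ^ 2
        = A * (F xk + 1 / (2 * A) * ‖z - v‖ ^ 2) := by field_simp
      _ ≤ A * ((h + ⟪g, z⟫) + 1 / (2 * A) * ‖z - x0‖ ^ 2) :=
          mul_le_mul_of_nonneg_left q hA.le
      _ = A * (h + ⟪g, z⟫) + 1 / 2 * ‖z - x0‖ ^ 2 := by field_simp
  have f2' : A * (F xplus + ⟪gbar, xk - y⟫ + 1 / (2 * L) * ‖gbar‖ ^ 2) ≤ A * F xk :=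
    mul_le_mul_of_nonneg_left (hlow xk) hA.le
  have f3 : a * (hbar + ⟪gbar, z⟫)
      = a * (F xplus + 1 / (2 * L) * ‖gbar‖ ^ 2 + ⟪gbar, z - y⟫) := by
    rw [hhbar, inner_sub_right]; ring
  -- the vector identity for y
  have hy' : (A + a) • y = A • xk + a • v := by
    rw [hy, smul_smul, mul_inv_cancel₀ hAa.ne', one_smul]
  have hvec : A • (xk - y) + a • (z - y) = a • (z - v) := by
    have hxk : A • xk = A • y + a • y - a • v := by
      rw [← add_smul]
      exact eq_sub_of_add_eq hy'.symm
    rw [smul_sub, smul_sub, smul_sub, hxk]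
    abel
  have f4 : A * ⟪gbar, xk - y⟫ + a * ⟪gbar, z - y⟫ = a * ⟪gbar, z - v⟫ := by
    calc A * ⟪gbar, xk - y⟫ + a * ⟪gbar, z - y⟫
        = ⟪gbar, A • (xk - y) + a • (z - y)⟫ := by
          rw [inner_add_right, real_inner_smul_right, real_inner_smul_right]
      _ = a * ⟪gbar, z - v⟫ := by rw [hvec, real_inner_smul_right]
  have f5 : 0 ≤ a ^ 2 * ‖gbar‖ ^ 2 + 2 * (a * ⟪gbar, z - v⟫) + ‖z - v‖ ^ 2 := by
    have h0 : (0:ℝ) ≤ ‖a • gbar + (z - v)‖ ^ 2 := by positivity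
    have he : ‖a • gbar + (z - v)‖ ^ 2
        = a ^ 2 * ‖gbar‖ ^ 2 + 2 * (a * ⟪gbar, z - v⟫) + ‖z - v‖ ^ 2 := by
      rw [norm_add_sq_real, real_inner_smul_left, norm_smul, Real.norm_eq_abs,
        mul_pow, sq_abs]
    linarith [he ▸ h0]
  have f6 : (A + a) * (1 / (2 * L) * ‖gbar‖ ^ 2) = a ^ 2 / 2 * ‖gbar‖ ^ 2 := by
    rw [← hweight]; field_simp
  have main : (A + a) * F xplus
      ≤ A * (h + ⟪g, z⟫) + a * (hbar + ⟪gbar, z⟫) + 1 / 2 * ‖z - x0‖ ^ 2 := by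
    linarith [f1', f2', f3, f4, f5, f6]
  have goalEq : (A * (h + ⟪g, z⟫) + a * (hbar + ⟪gbar, z⟫)) / (A + a)
      + 1 / (2 * (A + a)) * ‖z - x0‖ ^ 2
      = (A * (h + ⟪g, z⟫) + a * (hbar + ⟪gbar, z⟫) + 1 / 2 * ‖z - x0‖ ^ 2) / (A + a) := by
    field_simp
  rw [goalEq, le_div_iff₀ hAa]
  linarith [main]
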